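/- Let m be an odd positive integer, W ∈ 𝒯, and d ∈ 𝔽_q. The number of triples (X,Y,Z) ∈ 𝒯³ satisfying X + Y − Z = W + 2 in R and x³ + y³ + z³ = w³ + d in 𝔽_q equals: 1 if d = 0; 2 if d ∈ M_1; and 0 if d ∈ M_0 ∪ M_3. -/

import Mathlib

set_option linter.unusedSectionVars false
set_option maxHeartbeats 1000000

open Polynomial

/-- The residue field `𝔽_q = R/2R` of the Galois ring `R = (ℤ/4ℤ)[x]/(f)`. -/
abbrev ResField (f : Polynomial (ZMod 4)) : Type :=
  AdjoinRoot f ⧸ (Ideal.span {2} : Ideal (AdjoinRoot f))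

/-- Reduction modulo 2, `μ : R → R/2R`. -/
noncomputable def muRed (f : Polynomial (ZMod 4)) : AdjoinRoot f →+* ResField f :=
  Ideal.Quotient.mk _

/-- The number of roots of `z³ + z + d` in `𝔽_q`. -/
noncomputable def cubicRoots (f : Polynomial (ZMod 4)) (d : ResField f) : ℕ :=
  Nat.card {z : ResField f // z ^ 3 + z + d = 0}

section FieldLemmas

variable {K : Type} [Field K] [Fintype K] {m : ℕ}

def isAS (K : Type) [Field K] (a : K) : Prop := ∃ x : K, x ^ 2 + x = a

theorem sq_add' (htwo : (2:K) = 0) (a b : K) : (a + b) ^ 2 = a ^ 2 + b ^ 2 := by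
  linear_combination (a * b) * htwo

theorem frob_inj (htwo : (2:K) = 0) {a b : K} (h : a ^ 2 = b ^ 2) : a = b := by
  have h2 : (a - b) ^ 2 = 0 := by linear_combination h + (b ^ 2 - a * b) * htwo
  have h3 : a - b = 0 := sq_eq_zero_iff.mp h2
  linear_combination h3

theorem pow2_add (htwo : (2:K) = 0) (j : ℕ) (a b : K) :
    (a + b) ^ 2 ^ j = a ^ 2 ^ j + b ^ 2 ^ j := by
  induction j with
  | zero => simp
  | succ n ih =>
    have h : (2:ℕ) ^ (n+1) = 2 ^ n * 2 := by ring
    rw [h, pow_mul, pow_mul, pow_mul, ih, sq_add' htwo]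

theorem kpow_card (hcard : Fintype.card K = 2 ^ m) (a : K) : a ^ 2 ^ m = a := by
  rw [← hcard]; exact FiniteField.pow_card a

theorem frob_surj (hcard : Fintype.card K = 2 ^ m) (hm1 : 0 < m) (a : K) :
    ∃ b : K, b ^ 2 = a := by
  refine ⟨a ^ 2 ^ (m - 1), ?_⟩
  rw [← pow_mul]
  have h : 2 ^ (m - 1) * 2 = 2 ^ m := by
    rw [← pow_succ]
    congr 1
    omega
  rw [h]; exact kpow_card hcard a

theorem coprime3 (hm : Odd m) : Nat.Coprime 3 (2 ^ m - 1) := by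
  obtain ⟨k, hk⟩ := hm
  rw [Nat.Prime.coprime_iff_not_dvd (by norm_num)]
  intro hdvd
  have h1 : 2 ^ m % 3 = 2 := by
    subst hk
    rw [pow_succ, pow_mul, Nat.mul_mod, Nat.pow_mod]
    norm_num
  have h2 : 1 ≤ 2 ^ m := Nat.one_le_two_pow
  omega

theorem cube_inj (hm : Odd m) (hcard : Fintype.card K = 2 ^ m) {a b : K}
    (h : a ^ 3 = b ^ 3) : a = b := by
  rcases eq_or_ne b 0 with hb | hb
  · subst hb
    have : a ^ 3 = 0 := by simpa using h
    exact pow_eq_zero_iff (by norm_num) |>.mp this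
  rcases eq_or_ne a 0 with ha | ha
  · subst ha
    have : b ^ 3 = 0 := by simpa using h.symm
    exact (pow_eq_zero_iff (by norm_num) |>.mp this).symm
  set u : Kˣ := Units.mk0 (a / b) (div_ne_zero ha hb) with hu
  have hu3 : u ^ 3 = 1 := by
    ext
    push_cast [hu]
    field_simp
    simp only [Units.val_mk0, div_pow, h]
    exact div_self (pow_ne_zero 3 hb)
  have h1 : orderOf u ∣ 3 := orderOf_dvd_of_pow_eq_one hu3
  have h2 : orderOf u ∣ 2 ^ m - 1 := by
    classical
    have h3 := orderOf_dvd_card (x := u)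
    rwa [Fintype.card_units, hcard] at h3
  have h4 : orderOf u ∣ Nat.gcd 3 (2 ^ m - 1) := Nat.dvd_gcd h1 h2
  rw [coprime3 hm] at h4
  have h5 : u = 1 := orderOf_eq_one_iff.mp (Nat.dvd_one.mp h4)
  have h6 : a / b = 1 := by
    have := congrArg Units.val h5
    simpa [hu] using this
  field_simp at h6
  exact h6

theorem cube_surj (hm : Odd m) (hcard : Fintype.card K = 2 ^ m) (a : K) :
    ∃ b : K, b ^ 3 = a := by
  have hinj : Function.Injective (fun x : K => x ^ 3) := fun x y h => cube_inj hm hcard h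
  exact Finite.surjective_of_injective hinj a


theorem isAS_add (htwo : (2:K) = 0) {a b : K} (ha : isAS K a) (hb : isAS K b) :
    isAS K (a + b) := by
  obtain ⟨x, hx⟩ := ha
  obtain ⟨y, hy⟩ := hb
  exact ⟨x + y, by linear_combination hx + hy + (x * y) * htwo⟩

theorem isAS_sq_iff (htwo : (2:K) = 0) (hcard : Fintype.card K = 2 ^ m) (hm1 : 0 < m)
    {a : K} : isAS K (a ^ 2) ↔ isAS K a := by
  constructor
  · rintro ⟨x, hx⟩
    obtain ⟨y, hy⟩ := frob_surj hcard hm1 x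
    have h : (y ^ 2 + y) ^ 2 = a ^ 2 := by
      linear_combination hx + (y ^ 2 + x) * hy + hy + y ^ 3 * htwo
    exact ⟨y, frob_inj htwo h⟩
  · rintro ⟨x, hx⟩
    exact ⟨x ^ 2, by linear_combination (x ^ 2 + x + a) * hx - x ^ 3 * htwo⟩

theorem fiber_pair (htwo : (2:K) = 0) {c x0 x : K} (h0 : x0 ^ 2 + x0 = c)
    (h : x ^ 2 + x = c) : x = x0 ∨ x = x0 + 1 := by
  have h1 : (x - x0) * (x - x0 - 1) = 0 := by
    linear_combination h - h0 + (x0 ^ 2 + x0 - x - x * x0) * htwo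
  rcases mul_eq_zero.mp h1 with h2 | h2
  · left; linear_combination h2
  · right; linear_combination h2

theorem dich (htwo : (2:K) = 0) {a b : K} (ha : ¬ isAS K a) (hb : ¬ isAS K b) :
    isAS K (a + b) := by
  classical
  set φ : K → K := fun x => x ^ 2 + x with hφ
  set S : Finset K := Finset.univ.image φ with hS
  have hcard2 : Fintype.card K ≤ 2 * S.card := by
    have h := Finset.card_le_mul_card_image (f := φ) Finset.univ 2 ?_
    · simpa using h
    · intro c hc
      rw [Finset.mem_image] at hc
      obtain ⟨x0, -, hx0⟩ := hc
      have hsub : ({x ∈ Finset.univ | φ x = c} : Finset K) ⊆ {x0, x0 + 1} := by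
        intro x hx
        rw [Finset.mem_filter] at hx
        rcases fiber_pair htwo hx0 hx.2 with h2 | h2 <;> simp [h2]
      calc ({x ∈ Finset.univ | φ x = c} : Finset K).card
          ≤ ({x0, x0 + 1} : Finset K).card := Finset.card_le_card hsub
        _ ≤ 2 := (Finset.card_insert_le _ _).trans (by simp)
  set T : Finset K := S.image (fun c => a + c) with hT
  have hTcard : T.card = S.card := Finset.card_image_of_injective _ (add_right_injective a)
  have hdisj : Disjoint S T := by
    rw [Finset.disjoint_left]
    intro c hcS hcT
    rw [Finset.mem_image] at hcS hcT
    obtain ⟨x, -, hx⟩ := hcS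
    obtain ⟨c', hc', hac⟩ := hcT
    obtain ⟨y, -, hy⟩ := Finset.mem_image.mp hc'
    exact ha ⟨x + y, by linear_combination hx - hy - hac + (y ^ 2 + x * y + y) * htwo⟩
  have hunion : (S ∪ T).card = S.card + T.card := Finset.card_union_of_disjoint hdisj
  have huniv : S ∪ T = Finset.univ := by
    apply Finset.eq_univ_of_card
    have hle : (S ∪ T).card ≤ Fintype.card K := Finset.card_le_univ _
    omega
  have hbmem : b ∈ S ∪ T := huniv ▸ Finset.mem_univ b
  rcases Finset.mem_union.mp hbmem with h | h
  · obtain ⟨x, -, hx⟩ := Finset.mem_image.mp h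
    exact absurd ⟨x, hx⟩ hb
  · obtain ⟨c, hc, hac⟩ := Finset.mem_image.mp h
    obtain ⟨y, -, hy⟩ := Finset.mem_image.mp hc
    exact ⟨y, by linear_combination hy + hac - a * htwo⟩

theorem isAS_one_not (htwo : (2:K) = 0) (hm : Odd m) (hcard : Fintype.card K = 2 ^ m) :
    ¬ isAS K 1 := by
  rintro ⟨x, hx⟩
  have h3 : x ^ 3 = 1 := by linear_combination (x + 1) * hx - x ^ 2 * htwo
  have h1 : x = 1 := by
    have : x ^ 3 = (1:K) ^ 3 := by rw [h3]; ring
    exact cube_inj hm hcard this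
  rw [h1] at hx
  have h2 : (2:K) = 1 := by linear_combination hx
  rw [htwo] at h2
  exact zero_ne_one h2

theorem isAS_shift_iff (htwo : (2:K) = 0) {p a : K} (hp : isAS K p) :
    isAS K (p + a) ↔ isAS K a := by
  constructor
  · intro h
    have h2 := isAS_add htwo hp h
    have h3 : p + (p + a) = a := by linear_combination p * htwo
    rwa [h3] at h2
  · exact fun h => isAS_add htwo hp h

theorem dich_iff (htwo : (2:K) = 0) (hm : Odd m) (hcard : Fintype.card K = 2 ^ m) (a : K) :
    isAS K a ↔ ¬ isAS K (1 + a) := by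
  constructor
  · intro h h1
    have h2 := isAS_add htwo h h1
    have h3 : a + (1 + a) = 1 := by linear_combination a * htwo
    rw [h3] at h2
    exact isAS_one_not htwo hm hcard h2
  · intro h
    by_contra h2
    have h3 := dich htwo h2 h
    have h4 : a + (1 + a) = 1 := by linear_combination a * htwo
    rw [h4] at h3
    exact isAS_one_not htwo hm hcard h3


theorem natcard_pair {p : K → Prop} {x0 x1 : K} (hne : x0 ≠ x1)
    (hiff : ∀ x, p x ↔ (x = x0 ∨ x = x1)) : Nat.card {x : K // p x} = 2 := by
  classical
  rw [Nat.card_eq_fintype_card, Fintype.card_subtype]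
  have h : ({x ∈ Finset.univ | p x} : Finset K) = {x0, x1} := by
    ext x
    simp [hiff x]
  rw [h, Finset.card_pair hne]

theorem natcard_single {p : K → Prop} {x0 : K} (hiff : ∀ x, p x ↔ x = x0) :
    Nat.card {x : K // p x} = 1 := by
  classical
  rw [Nat.card_eq_fintype_card, Fintype.card_subtype]
  have h : ({x ∈ Finset.univ | p x} : Finset K) = {x0} := by
    ext x
    simp [hiff x]
  rw [h, Finset.card_singleton]

theorem natcard_none {p : K → Prop} (h : ∀ x, ¬ p x) : Nat.card {x : K // p x} = 0 := by
  have : IsEmpty {x : K // p x} := ⟨fun x => h x.1 x.2⟩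
  exact Nat.card_of_isEmpty

theorem quad_iff_AS (htwo : (2:K) = 0) {s : K} (c : K) (hs : s ≠ 0) :
    (∃ x : K, x ^ 2 + s * x + c = 0) ↔ isAS K (c / s ^ 2) := by
  constructor
  · rintro ⟨x, hx⟩
    refine ⟨x / s, ?_⟩
    field_simp
    linear_combination hx - c * htwo
  · rintro ⟨y, hy⟩
    refine ⟨s * y, ?_⟩
    field_simp at hy
    linear_combination hy + c * htwo

theorem cubic_factor {d s : K} (hs : s ^ 3 + s + d = 0) (r : K) :
    r ^ 3 + r + d = (r - s) * (r ^ 2 + s * r + (s ^ 2 + 1)) := by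
  linear_combination hs

theorem cubic_root_ne_zero {d s : K} (hd : d ≠ 0) (hs : s ^ 3 + s + d = 0) : s ≠ 0 := by
  intro h
  rw [h] at hs
  exact hd (by linear_combination hs)

theorem cubic_root_ne_one (htwo : (2:K) = 0) {d s : K} (hd : d ≠ 0)
    (hs : s ^ 3 + s + d = 0) : s ≠ 1 := by
  intro h
  rw [h] at hs
  exact hd (by linear_combination hs - htwo)

theorem key1 (htwo : (2:K) = 0) (hm : Odd m) (hm1 : 0 < m)
    (hcard : Fintype.card K = 2 ^ m) {d s : K} (hd : d ≠ 0) (hs : s ^ 3 + s + d = 0) :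
    (∃ u : K, u ^ 2 + d * u + 1 = 0) ↔ isAS K s⁻¹ := by
  have hs0 : s ≠ 0 := cubic_root_ne_zero hd hs
  have hs1 : s ≠ 1 := cubic_root_ne_one htwo hd hs
  have hs1' : s + 1 ≠ 0 := by
    intro h
    exact hs1 (by linear_combination h - htwo)
  have h1 : (∃ u : K, u ^ 2 + d * u + 1 = 0) ↔ isAS K ((1:K) / d ^ 2) :=
    quad_iff_AS htwo 1 hd
  have h2 : (1:K) / d ^ 2 = (d⁻¹) ^ 2 := by rw [one_div, inv_pow]
  have h4 : (((s + 1)⁻¹ ^ 2 + (s + 1)⁻¹) + s⁻¹) * d = 1 := by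
    field_simp
    linear_combination hs + ((s^2+2*s)*d - s^2 - s - s^3) * htwo
  have hident : d⁻¹ = ((s + 1)⁻¹ ^ 2 + (s + 1)⁻¹) + s⁻¹ := inv_eq_of_mul_eq_one_left h4
  rw [h1, h2, isAS_sq_iff htwo hcard hm1, hident]
  exact isAS_shift_iff htwo ⟨(s + 1)⁻¹, rfl⟩

theorem key2 (htwo : (2:K) = 0) (hm : Odd m) (hm1 : 0 < m)
    (hcard : Fintype.card K = 2 ^ m) {d s : K} (hd : d ≠ 0) (hs : s ^ 3 + s + d = 0) :
    (∃ r : K, r ^ 3 + r + d = 0 ∧ r ≠ s) ↔ isAS K (1 + s⁻¹) := by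
  have hs0 : s ≠ 0 := cubic_root_ne_zero hd hs
  have hs1 : s ≠ 1 := cubic_root_ne_one htwo hd hs
  have h3 : (s ^ 2 + 1) / s ^ 2 = (1 + s⁻¹) ^ 2 := by
    field_simp
    linear_combination - s * htwo
  constructor
  · rintro ⟨r, hr, hrs⟩
    have hq : r ^ 2 + s * r + (s ^ 2 + 1) = 0 := by
      have h := cubic_factor hs r
      rw [hr] at h
      rcases mul_eq_zero.mp h.symm with h2 | h2
      · exact absurd (by linear_combination h2) hrs
      · exact h2
    have h2 := (quad_iff_AS htwo (s ^ 2 + 1) hs0).mp ⟨r, hq⟩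
    rw [h3] at h2
    exact (isAS_sq_iff htwo hcard hm1).mp h2
  · intro h
    have h2 := (isAS_sq_iff htwo hcard hm1).mpr h
    rw [← h3] at h2
    obtain ⟨r, hr⟩ := (quad_iff_AS htwo (s ^ 2 + 1) hs0).mpr h2
    refine ⟨r, ?_, ?_⟩
    · rw [cubic_factor hs r, hr, mul_zero]
    · intro heq
      rw [heq] at hr
      apply hs1
      apply frob_inj htwo (a := s) (b := 1)
      have : (1:K) ^ 2 = 1 := one_pow 2
      rw [this]
      linear_combination hr - (s ^ 2 + 1) * htwo

theorem cubic_of_quad (htwo : (2:K) = 0) (hm : Odd m) (hm1 : 0 < m)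
    (hcard : Fintype.card K = 2 ^ m) {d u : K} (hd : d ≠ 0)
    (hu : u ^ 2 + d * u + 1 = 0) : ∃ s : K, s ^ 3 + s + d = 0 := by
  have hu0 : u ≠ 0 := by
    intro h
    rw [h] at hu
    norm_num at hu
  obtain ⟨t, ht⟩ := cube_surj hm hcard u
  have ht0 : t ≠ 0 := by
    intro h
    rw [h] at ht
    apply hu0
    rw [← ht]
    ring
  have hu' : t ^ 6 + d * t ^ 3 + 1 = 0 := by
    have : (t ^ 3) ^ 2 + d * t ^ 3 + 1 = 0 := by rw [ht]; exact hu
    linear_combination this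
  have hinv : t * t⁻¹ = 1 := mul_inv_cancel₀ ht0
  refine ⟨t + t⁻¹, ?_⟩
  have key : ((t + t⁻¹) ^ 3 + (t + t⁻¹) + d) * t ^ 3 = 0 := by
    linear_combination (3*t^4 + 3*t^2*(t*t⁻¹+1) + (t^2*t⁻¹^2 + t*t⁻¹ + 1) + t^2) * hinv
      + hu' + (2*t^4 + 2*t^2) * htwo
  rcases mul_eq_zero.mp key with h | h
  · exact h
  · exact absurd (pow_eq_zero_iff (by norm_num) |>.mp h) ht0

theorem quadcard_two (htwo : (2:K) = 0) {d : K} (hd : d ≠ 0) {u0 : K}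
    (hu0 : u0 ^ 2 + d * u0 + 1 = 0) :
    Nat.card {u : K // u ^ 2 + d * u + 1 = 0} = 2 := by
  apply natcard_pair (x0 := u0) (x1 := u0 + d)
  · intro h
    exact hd (by linear_combination -h)
  · intro u
    constructor
    · intro hu
      have h1 : (u - u0) * (u - u0 - d) = 0 := by
        linear_combination hu - hu0 + (u0 ^ 2 - u * u0 - d * u + d * u0) * htwo
      rcases mul_eq_zero.mp h1 with h2 | h2
      · left; linear_combination h2
      · right; linear_combination h2
    · rintro (h | h) <;> subst h
      · exact hu0
      · linear_combination hu0 + (d * u0 + d ^ 2) * htwo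

theorem field_count (htwo : (2:K) = 0) (hm : Odd m) (hm1 : 0 < m)
    (hcard : Fintype.card K = 2 ^ m) (d : K) :
    (d = 0 → Nat.card {u : K // u ^ 2 + d * u + 1 = 0} = 1) ∧
    (d ≠ 0 → Nat.card {z : K // z ^ 3 + z + d = 0} = 1 →
      Nat.card {u : K // u ^ 2 + d * u + 1 = 0} = 2) ∧
    (d ≠ 0 → (Nat.card {z : K // z ^ 3 + z + d = 0} = 0 ∨
        Nat.card {z : K // z ^ 3 + z + d = 0} = 3) →
      Nat.card {u : K // u ^ 2 + d * u + 1 = 0} = 0) := by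
  refine ⟨?_, ?_, ?_⟩
  · intro hd0
    subst hd0
    apply natcard_single (x0 := (1:K))
    intro u
    constructor
    · intro hu
      apply frob_inj htwo (a := u) (b := 1)
      have h1 : (1:K) ^ 2 = 1 := one_pow 2
      rw [h1]
      linear_combination hu - htwo
    · intro h
      subst h
      linear_combination htwo
  · intro hd hN1
    rw [Nat.card_eq_one_iff_unique] at hN1
    obtain ⟨hsub, ⟨⟨s, hs⟩⟩⟩ := hN1
    have hsolv : ∃ u : K, u ^ 2 + d * u + 1 = 0 := by
      rw [key1 htwo hm hm1 hcard hd hs, dich_iff htwo hm hcard]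
      intro hAS
      obtain ⟨r, hr, hrs⟩ := (key2 htwo hm hm1 hcard hd hs).mpr hAS
      exact hrs (congrArg Subtype.val (hsub.elim ⟨r, hr⟩ ⟨s, hs⟩))
    obtain ⟨u0, hu0⟩ := hsolv
    exact quadcard_two htwo hd hu0
  · intro hd hN
    apply natcard_none
    intro u hu
    obtain ⟨s, hs⟩ := cubic_of_quad htwo hm hm1 hcard hd hu
    rcases hN with h0 | h3
    · rw [Nat.card_eq_zero] at h0
      rcases h0 with he | hi
      · exact he.elim ⟨s, hs⟩
      · haveI : Finite {z : K // z ^ 3 + z + d = 0} := Subtype.finite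
        exact absurd hi (not_infinite_iff_finite.mpr this)
    · have hAS : isAS K s⁻¹ := (key1 htwo hm hm1 hcard hd hs).mp ⟨u, hu⟩
      have hnot := (dich_iff htwo hm hcard s⁻¹).mp hAS
      have hno2 : ¬ ∃ r : K, r ^ 3 + r + d = 0 ∧ r ≠ s := fun h =>
        hnot ((key2 htwo hm hm1 hcard hd hs).mp h)
      have hall : ∀ z : {z : K // z ^ 3 + z + d = 0}, z = ⟨s, hs⟩ := by
        rintro ⟨r, hr⟩
        by_contra hne
        exact hno2 ⟨r, hr, fun h => hne (Subtype.ext h)⟩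
      have h1 : Nat.card {z : K // z ^ 3 + z + d = 0} = 1 := by
        rw [Nat.card_eq_one_iff_unique]
        exact ⟨⟨fun a b => (hall a).trans (hall b).symm⟩, ⟨⟨s, hs⟩⟩⟩
      omega

end FieldLemmas

section GaloisRing

variable {f : Polynomial (ZMod 4)}

theorem four_eq_zero : (4 : AdjoinRoot f) = 0 := by
  have h1 : (4 : AdjoinRoot f) = algebraMap (ZMod 4) (AdjoinRoot f) 4 :=
    (map_ofNat _ 4).symm
  rw [h1, show (4 : ZMod 4) = 0 by decide, map_zero]

theorem sq2 (r s : AdjoinRoot f) : (r + 2 * s) ^ 2 = r ^ 2 := by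
  linear_combination (r * s + s ^ 2) * (four_eq_zero (f := f))

theorem teich_add_pow {k : ℕ} (hk : 0 < k) (X Y : AdjoinRoot f) :
    (X + Y) ^ 2 ^ k = X ^ 2 ^ k + Y ^ 2 ^ k + 2 * (X * Y) ^ 2 ^ (k - 1) := by
  induction k with
  | zero => omega
  | succ n ih =>
    have hmul : ∀ g : AdjoinRoot f, g ^ 2 ^ (n + 1) = (g ^ 2 ^ n) ^ 2 := by
      intro g
      rw [pow_succ, pow_mul]
    rcases Nat.eq_zero_or_pos n with h0 | hn
    · subst h0
      norm_num
      ring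
    · rw [hmul, ih hn, sq2 (X ^ 2 ^ n + Y ^ 2 ^ n) ((X * Y) ^ 2 ^ (n - 1)), hmul X, hmul Y]
      have hn1 : n + 1 - 1 = n := by omega
      rw [hn1, mul_pow]
      ring

theorem add_two_pow {k : ℕ} (hk : 0 < k) (U : AdjoinRoot f) :
    (U + 2) ^ 2 ^ k = U ^ 2 ^ k := by
  have h1 : (2:ℕ) ^ k = 2 * 2 ^ (k - 1) := by
    rw [← pow_succ']
    congr 1
    omega
  rw [h1, pow_mul, pow_mul]
  congr 1
  have h2 : U + 2 = U + 2 * 1 := by ring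
  rw [h2, sq2]

theorem mu_two : muRed f 2 = 0 :=
  Ideal.Quotient.eq_zero_iff_mem.mpr (Ideal.mem_span_singleton_self 2)

theorem mem_ker {a : AdjoinRoot f} (h : muRed f a = 0) : ∃ s, a = 2 * s := by
  have h1 := Ideal.Quotient.eq_zero_iff_mem.mp h
  obtain ⟨s, hs⟩ := Ideal.mem_span_singleton'.mp h1
  exact ⟨s, by rw [← hs]; ring⟩

theorem two_mul_eq_zero_imp (hmonic : f.Monic) {r : AdjoinRoot f} (h : 2 * r = 0) :
    muRed f r = 0 := by
  classical
  set pb := AdjoinRoot.powerBasis' hmonic with hpb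
  set B := pb.basis with hB
  set c := B.repr r with hc
  have hsmul : ((2 : ZMod 4) • r) = 2 * r := by
    rw [Algebra.smul_def]
    exact congrArg (· * r) (map_ofNat _ 2)
  have hci : ∀ i, (2 : ZMod 4) * c i = 0 := by
    intro i
    have h1 : B.repr ((2 : ZMod 4) • r) i = (2 : ZMod 4) * c i := by
      rw [map_smul]
      rfl
    rw [hsmul, h, map_zero] at h1
    exact h1.symm.trans (by rfl)
  set g : Fin pb.dim → ZMod 4 := fun i => if c i = 2 then 1 else 0 with hg
  have h2g : ∀ i, (2 : ZMod 4) * g i = c i := by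
    intro i
    by_cases h2 : c i = 2
    · simp only [hg, if_pos h2, mul_one, h2]
    · have h3 : c i = 0 := by
        have hall : ∀ a : ZMod 4, 2 * a = 0 → a = 0 ∨ a = 2 := by decide
        rcases hall _ (hci i) with h4 | h4
        · exact h4
        · exact absurd h4 h2
      simp only [hg, if_neg h2, mul_zero, h3]
  have hr2 : r = 2 * (∑ i, g i • B i) := by
    conv_lhs => rw [← B.sum_repr r]
    rw [Finset.mul_sum]
    apply Finset.sum_congr rfl
    intro i _
    rw [← hc, ← h2g i, mul_smul]
    rw [Algebra.smul_def (2 : ZMod 4), map_ofNat]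
  rw [hr2, map_mul, mu_two, zero_mul]

theorem teich_unique {m : ℕ} (hmpos : 0 < m) {X Y : AdjoinRoot f}
    (hX : X ^ 2 ^ m = X) (hY : Y ^ 2 ^ m = Y)
    (h : muRed f X = muRed f Y) : X = Y := by
  have h0 : muRed f (X - Y) = 0 := by rw [map_sub, h, sub_self]
  obtain ⟨s, hs⟩ := mem_ker h0
  have hXY : X = Y + 2 * s := by linear_combination hs
  have h2m : (2:ℕ) ^ m = 2 * 2 ^ (m - 1) := by
    rw [← pow_succ']
    congr 1
    omega
  have h1 : X ^ 2 ^ m = Y ^ 2 ^ m := by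
    rw [h2m, pow_mul, pow_mul, hXY, sq2]
  rw [hX, hY] at h1
  exact h1

theorem teich_exists {m : ℕ} (hmpos : 0 < m)
    (hpow : ∀ a : ResField f, a ^ 2 ^ m = a) (a : ResField f) :
    ∃ X : AdjoinRoot f, X ^ 2 ^ m = X ∧ muRed f X = a := by
  obtain ⟨r, hr⟩ := Ideal.Quotient.mk_surjective a
  have hr' : muRed f r = a := hr
  have h2m : (2:ℕ) ^ m = 2 * 2 ^ (m - 1) := by
    rw [← pow_succ']
    congr 1
    omega
  refine ⟨r ^ 2 ^ m, ?_, ?_⟩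
  · have h0 : muRed f (r ^ 2 ^ m - r) = 0 := by
      rw [map_sub, map_pow, hr', hpow, sub_self]
    obtain ⟨s, hs⟩ := mem_ker h0
    have h1 : r ^ 2 ^ m = r + 2 * s := by linear_combination hs
    calc (r ^ 2 ^ m) ^ 2 ^ m = (r + 2 * s) ^ 2 ^ m := by rw [h1]
      _ = r ^ 2 ^ m := by rw [h2m, pow_mul, pow_mul, sq2]
  · rw [map_pow, hr', hpow]

theorem forward_eqs (hmonic : f.Monic) {m : ℕ} (hmpos : 0 < m)
    (htwo : (2 : ResField f) = 0) (hpow : ∀ a : ResField f, a ^ 2 ^ m = a)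
    {X Y Z W : AdjoinRoot f}
    (hX : X ^ 2 ^ m = X) (hY : Y ^ 2 ^ m = Y) (hZ : Z ^ 2 ^ m = Z) (hW : W ^ 2 ^ m = W)
    (heq : X + Y - Z = W + 2) :
    muRed f X + muRed f Y - muRed f Z = muRed f W ∧
    muRed f X * muRed f Y = muRed f W * muRed f Z + 1 := by
  have e2 : (2:ℕ) ^ (m - 1) * 2 = 2 ^ m := by
    rw [← pow_succ]
    congr 1
    omega
  constructor
  · have h1 := congrArg (muRed f) heq
    rw [map_sub, map_add, map_add] at h1
    rw [h1, mu_two, add_zero]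
  · have hsum : X + Y = (W + Z) + 2 := by linear_combination heq
    have hL : (X + Y) ^ 2 ^ m = X + Y + 2 * (X * Y) ^ 2 ^ (m - 1) := by
      rw [teich_add_pow hmpos, hX, hY]
    have hR : ((W + Z) + 2) ^ 2 ^ m = W + Z + 2 * (W * Z) ^ 2 ^ (m - 1) := by
      rw [add_two_pow hmpos, teich_add_pow hmpos, hW, hZ]
    have h1 : X + Y + 2 * (X * Y) ^ 2 ^ (m - 1) = W + Z + 2 * (W * Z) ^ 2 ^ (m - 1) := by
      rw [← hL, hsum, hR]
    have hkey : 2 * ((X * Y) ^ 2 ^ (m - 1) - (W * Z) ^ 2 ^ (m - 1) - 1) = 0 := by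
      linear_combination h1 - hsum - four_eq_zero (f := f)
    have h2 := two_mul_eq_zero_imp hmonic hkey
    rw [map_sub, map_sub, map_pow, map_pow, map_mul, map_mul, map_one] at h2
    have h3 : (muRed f X * muRed f Y) ^ 2 ^ (m - 1)
        = (muRed f W * muRed f Z) ^ 2 ^ (m - 1) + 1 := by linear_combination h2
    have h4 : ((muRed f X * muRed f Y) ^ 2 ^ (m - 1)) ^ 2
        = ((muRed f W * muRed f Z) ^ 2 ^ (m - 1)) ^ 2 + 1 := by
      rw [h3]
      linear_combination ((muRed f W * muRed f Z) ^ 2 ^ (m - 1)) * htwo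
    rw [← pow_mul, ← pow_mul, e2, hpow, hpow] at h4
    exact h4

theorem backward_eq (hmonic : f.Monic) {m : ℕ} (hmpos : 0 < m)
    (htwo : (2 : ResField f) = 0) (hpow : ∀ a : ResField f, a ^ 2 ^ m = a)
    {X Y Z W : AdjoinRoot f}
    (hX : X ^ 2 ^ m = X) (hY : Y ^ 2 ^ m = Y) (hZ : Z ^ 2 ^ m = Z) (hW : W ^ 2 ^ m = W)
    (h1 : muRed f X + muRed f Y - muRed f Z = muRed f W)
    (h2 : muRed f X * muRed f Y = muRed f W * muRed f Z + 1) :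
    X + Y - Z = W + 2 := by
  have e2 : (2:ℕ) ^ (m - 1) * 2 = 2 ^ m := by
    rw [← pow_succ]
    congr 1
    omega
  have h2m : (2:ℕ) ^ m = 2 * 2 ^ (m - 1) := by
    rw [← pow_succ']
    congr 1
    omega
  have hμD : muRed f (X + Y - Z - W - 2) = 0 := by
    rw [map_sub, map_sub, map_sub, map_add, mu_two]
    rw [show muRed f X + muRed f Y - muRed f Z - muRed f W - 0
        = (muRed f X + muRed f Y - muRed f Z) - muRed f W by ring, h1, sub_self]
  obtain ⟨r, hr⟩ := mem_ker hμD
  have hsum : X + Y = (W + Z) + 2 + 2 * r := by linear_combination hr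
  have hL : (X + Y) ^ 2 ^ m = X + Y + 2 * (X * Y) ^ 2 ^ (m - 1) := by
    rw [teich_add_pow hmpos, hX, hY]
  have hR : ((W + Z) + 2 + 2 * r) ^ 2 ^ m = W + Z + 2 * (W * Z) ^ 2 ^ (m - 1) := by
    have h3 : (W + Z) + 2 + 2 * r = (W + Z) + 2 * (1 + r) := by ring
    rw [h3]
    have h4 : ((W + Z) + 2 * (1 + r)) ^ 2 ^ m = (W + Z) ^ 2 ^ m := by
      rw [h2m, pow_mul, pow_mul, sq2]
    rw [h4, teich_add_pow hmpos, hW, hZ]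
  have hcomb : X + Y + 2 * (X * Y) ^ 2 ^ (m - 1) = W + Z + 2 * (W * Z) ^ 2 ^ (m - 1) := by
    rw [← hL, hsum, hR]
  have hkey : 2 * ((X * Y) ^ 2 ^ (m - 1) - (W * Z) ^ 2 ^ (m - 1) - 1 - r) = 0 := by
    linear_combination hcomb - hsum - four_eq_zero (f := f) - r * four_eq_zero (f := f)
  have h5 := two_mul_eq_zero_imp hmonic hkey
  rw [map_sub, map_sub, map_sub, map_pow, map_pow, map_mul, map_mul, map_one] at h5
  -- freshman: (a + b)^(2^j) = a^(2^j) + b^(2^j) in ResField f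
  have hfresh : ∀ (j : ℕ) (a b : ResField f), (a + b) ^ 2 ^ j = a ^ 2 ^ j + b ^ 2 ^ j := by
    intro j
    induction j with
    | zero => intro a b; simp
    | succ n ih =>
      intro a b
      have h6 : (2:ℕ) ^ (n + 1) = 2 ^ n * 2 := by ring
      rw [h6, pow_mul, pow_mul, pow_mul, ih]
      linear_combination (a ^ 2 ^ n * b ^ 2 ^ n) * htwo
  have h7 : (muRed f X * muRed f Y) ^ 2 ^ (m - 1)
      = (muRed f W * muRed f Z) ^ 2 ^ (m - 1) + 1 := by
    rw [h2, hfresh, one_pow]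
  rw [h7] at h5
  have h8 : muRed f r = 0 := by linear_combination -h5
  obtain ⟨s, hs⟩ := mem_ker h8
  have h9 : X + Y - Z - W - 2 = 2 * (2 * s) := by rw [← hs, ← hr]
  have h10 : X + Y - Z - W - 2 = 0 := by
    rw [h9]
    linear_combination s * four_eq_zero (f := f)
  linear_combination h10

end GaloisRing
open Polynomial


section Iso

variable (f : Polynomial (ZMod 4))

noncomputable def theta :
    AdjoinRoot f →+*
      AdjoinRoot (f.map (ZMod.castHom (show (2:ℕ) ∣ 4 by norm_num) (ZMod 2))) :=
  AdjoinRoot.lift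
    ((algebraMap (ZMod 2) _).comp (ZMod.castHom (show (2:ℕ) ∣ 4 by norm_num) (ZMod 2)))
    (AdjoinRoot.root _) (by
      rw [← Polynomial.eval₂_map, AdjoinRoot.algebraMap_eq]
      exact AdjoinRoot.eval₂_root _)

theorem theta_mk (P : Polynomial (ZMod 4)) :
    theta f (AdjoinRoot.mk f P)
      = AdjoinRoot.mk _ (P.map (ZMod.castHom (show (2:ℕ) ∣ 4 by norm_num) (ZMod 2))) := by
  rw [theta, AdjoinRoot.lift_mk, ← AdjoinRoot.aeval_eq, Polynomial.aeval_def,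
    Polynomial.eval₂_map, AdjoinRoot.algebraMap_eq]

theorem cast_surj :
    Function.Surjective (ZMod.castHom (show (2:ℕ) ∣ 4 by norm_num) (ZMod 2)) := by
  decide

theorem theta_surj : Function.Surjective (theta f) := by
  intro y
  obtain ⟨q, rfl⟩ := AdjoinRoot.mk_surjective y
  obtain ⟨P, hP⟩ := Polynomial.map_surjective _ (cast_surj) q
  exact ⟨AdjoinRoot.mk f P, by rw [theta_mk, hP]⟩

theorem ker_cast :
    RingHom.ker (ZMod.castHom (show (2:ℕ) ∣ 4 by norm_num) (ZMod 2))
      = Ideal.span {2} := by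
  ext a
  simp only [RingHom.mem_ker, Ideal.mem_span_singleton, dvd_def]
  revert a
  decide

theorem two_eq_zero_F :
    (2 : AdjoinRoot (f.map (ZMod.castHom (show (2:ℕ) ∣ 4 by norm_num) (ZMod 2)))) = 0 := by
  have h1 : (2 : AdjoinRoot (f.map (ZMod.castHom (show (2:ℕ) ∣ 4 by norm_num) (ZMod 2))))
      = (1 : _) + 1 := by norm_num
  rw [h1, ← map_one (algebraMap (ZMod 2) _), ← map_add,
    show (1 : ZMod 2) + 1 = 0 by decide, map_zero]

theorem ker_theta : RingHom.ker (theta f) = Ideal.span {2} := by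
  ext y
  rw [RingHom.mem_ker]
  constructor
  · intro hy
    obtain ⟨P, rfl⟩ := AdjoinRoot.mk_surjective y
    rw [theta_mk, AdjoinRoot.mk_eq_zero] at hy
    obtain ⟨Qb, hQb⟩ := hy
    obtain ⟨Q, hQ⟩ := Polynomial.map_surjective _ (cast_surj) Qb
    have hmap : (P - f * Q).map (ZMod.castHom (show (2:ℕ) ∣ 4 by norm_num) (ZMod 2)) = 0 := by
      rw [Polynomial.map_sub, Polynomial.map_mul, hQ, ← hQb, sub_self]
    have hker : P - f * Q
        ∈ RingHom.ker (Polynomial.mapRingHom (ZMod.castHom (show (2:ℕ) ∣ 4 by norm_num) (ZMod 2))) := by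
      rw [RingHom.mem_ker, Polynomial.coe_mapRingHom]
      exact hmap
    rw [Polynomial.ker_mapRingHom, ker_cast, Ideal.map_span, Set.image_singleton] at hker
    obtain ⟨a, ha⟩ := Ideal.mem_span_singleton'.mp hker
    rw [Ideal.mem_span_singleton']
    refine ⟨AdjoinRoot.mk f a, ?_⟩
    have h1 : AdjoinRoot.mk f P = AdjoinRoot.mk f (a * Polynomial.C 2 + f * Q) := by
      congr 1
      linear_combination -ha
    rw [h1, map_add, map_mul, map_mul, AdjoinRoot.mk_self, zero_mul, add_zero,
      AdjoinRoot.mk_C]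
    rw [map_ofNat (AdjoinRoot.of f) 2]
  · intro hy
    obtain ⟨s, hs⟩ := Ideal.mem_span_singleton'.mp hy
    rw [← hs, map_mul]
    have h2 : theta f 2 = 0 := by
      rw [map_ofNat (theta f) 2, two_eq_zero_F]
    rw [h2, mul_zero]

noncomputable def resEquiv :
    ResField f ≃+*
      AdjoinRoot (f.map (ZMod.castHom (show (2:ℕ) ∣ 4 by norm_num) (ZMod 2))) :=
  (Ideal.quotEquivOfEq (ker_theta f).symm).trans
    (RingHom.quotientKerEquivOfSurjective (theta_surj f))

theorem resfield_props (hmonic : f.Monic) {m : ℕ} (hdeg : f.natDegree = m) (hmpos : 0 < m)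
    (hirr : Irreducible (f.map (ZMod.castHom (show (2:ℕ) ∣ 4 by norm_num) (ZMod 2)))) :
    ∃ _ : Fintype (ResField f),
      IsField (ResField f) ∧ (2 : ResField f) = 0 ∧
        Fintype.card (ResField f) = 2 ^ m := by
  classical
  set fb := f.map (ZMod.castHom (show (2:ℕ) ∣ 4 by norm_num) (ZMod 2)) with hfb
  haveI : Fact (Irreducible fb) := ⟨hirr⟩
  have hfb0 : fb ≠ 0 := hirr.ne_zero
  set pb := AdjoinRoot.powerBasis hfb0 with hpb
  haveI : Fintype (AdjoinRoot fb) :=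
    Fintype.ofEquiv (Fin pb.dim → ZMod 2) pb.basis.equivFun.toEquiv.symm
  have hdim : pb.dim = m := by
    rw [hpb, AdjoinRoot.powerBasis_dim, hfb, hmonic.natDegree_map, hdeg]
  have hcardF : Fintype.card (AdjoinRoot fb) = 2 ^ m := by
    rw [Fintype.card_congr pb.basis.equivFun.toEquiv, Fintype.card_fun, ZMod.card,
      Fintype.card_fin, hdim]
  set e := resEquiv f with he
  haveI : Fintype (ResField f) := Fintype.ofEquiv (AdjoinRoot fb) e.symm.toEquiv
  refine ⟨inferInstance, ?_, ?_, ?_⟩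
  · exact MulEquiv.isField (Field.toIsField _) e.toMulEquiv
  · have h1 : e (2 : ResField f) = 0 := by
      rw [map_ofNat e 2]
      exact two_eq_zero_F f
    have h2 := congrArg e.symm h1
    rw [RingEquiv.symm_apply_apply, map_zero] at h2
    exact h2
  · rw [Fintype.card_congr e.toEquiv, hcardF]

end Iso
section Correspondence

variable {f : Polynomial (ZMod 4)}

theorem forward_quad (hmonic : f.Monic) {m : ℕ} (hmpos : 0 < m)
    (htwo : (2 : ResField f) = 0) (hpow : ∀ a : ResField f, a ^ 2 ^ m = a)
    {X Y Z W : AdjoinRoot f}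
    (hX : X ^ 2 ^ m = X) (hY : Y ^ 2 ^ m = Y) (hZ : Z ^ 2 ^ m = Z) (hW : W ^ 2 ^ m = W)
    (heq : X + Y - Z = W + 2) {d : ResField f}
    (hcube : muRed f X ^ 3 + muRed f Y ^ 3 + muRed f Z ^ 3 = muRed f W ^ 3 + d) :
    (muRed f X - muRed f W) ^ 2 + d * (muRed f X - muRed f W) + 1 = 0 ∧
      (muRed f X - muRed f W) * (muRed f Y - muRed f W) = 1 ∧
      muRed f X + muRed f Y - muRed f Z = muRed f W := by
  obtain ⟨h1, h2⟩ := forward_eqs hmonic hmpos htwo hpow hX hY hZ hW heq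
  set x := muRed f X
  set y := muRed f Y
  set z := muRed f Z
  set w := muRed f W
  have huv : (x - w) * (y - w) = 1 := by linear_combination h2 - w * h1
  have hd2 : d = (x - w) + (y - w) := by
    linear_combination (-1 : ResField f) * hcube
      - (z ^ 2 + z * (x + y - w) + (x + y - w) ^ 2) * h1
      + 3 * ((x - w) + (y - w)) * huv
      + ((x - w) + (y - w) + (x - w) ^ 3 + (y - w) ^ 3 + w ^ 3
          + 3 * w * ((x - w) ^ 2 + (x - w) * (y - w) + (y - w) ^ 2)
          + 3 * w ^ 2 * ((x - w) + (y - w))) * htwo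
  refine ⟨?_, huv, h1⟩
  linear_combination (x - w) * hd2 + huv + ((x - w) ^ 2 + 1) * htwo

theorem backward_d (htwo : (2 : ResField f) = 0) {d u v : ResField f}
    (hu : u ^ 2 + d * u + 1 = 0) (huv : u * v = 1) : d = u + v := by
  linear_combination -v * hu + (u + d) * huv + d * htwo

theorem backward_cube (htwo : (2 : ResField f) = 0) {d u v : ResField f}
    (hu : u ^ 2 + d * u + 1 = 0) (huv : u * v = 1) (w : ResField f) :
    (u + w) ^ 3 + (v + w) ^ 3 + (u + v + w) ^ 3 = w ^ 3 + d := by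
  have hd2 : d = u + v := backward_d htwo hu huv
  linear_combination 3 * (u + v) * huv - hd2
    + ((u + v) + u ^ 3 + v ^ 3 + w ^ 3 + 3 * w * (u ^ 2 + u * v + v ^ 2)
        + 3 * w ^ 2 * (u + v)) * htwo

theorem count_eq (hmonic : f.Monic) {m : ℕ} (hmpos : 0 < m)
    (hfield : IsField (ResField f))
    (htwo : (2 : ResField f) = 0) (hpow : ∀ a : ResField f, a ^ 2 ^ m = a)
    (W : AdjoinRoot f) (hW : W ^ 2 ^ m = W) (d : ResField f) :
    Nat.card {t : AdjoinRoot f × AdjoinRoot f × AdjoinRoot f //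
        (t.1 ^ 2 ^ m = t.1 ∧ t.2.1 ^ 2 ^ m = t.2.1 ∧ t.2.2 ^ 2 ^ m = t.2.2) ∧
        t.1 + t.2.1 - t.2.2 = W + 2 ∧
        muRed f t.1 ^ 3 + muRed f t.2.1 ^ 3 + muRed f t.2.2 ^ 3 = muRed f W ^ 3 + d}
      = Nat.card {u : ResField f // u ^ 2 + d * u + 1 = 0} := by
  letI : Field (ResField f) := hfield.toField
  choose tau htau1 htau2 using teich_exists (f := f) hmpos hpow
  have hne0 : ∀ u : ResField f, u ^ 2 + d * u + 1 = 0 → u ≠ 0 := by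
    intro u hu h0
    rw [h0] at hu
    norm_num at hu
  have hfwd : ∀ t : {t : AdjoinRoot f × AdjoinRoot f × AdjoinRoot f //
      (t.1 ^ 2 ^ m = t.1 ∧ t.2.1 ^ 2 ^ m = t.2.1 ∧ t.2.2 ^ 2 ^ m = t.2.2) ∧
      t.1 + t.2.1 - t.2.2 = W + 2 ∧
      muRed f t.1 ^ 3 + muRed f t.2.1 ^ 3 + muRed f t.2.2 ^ 3 = muRed f W ^ 3 + d},
      (muRed f t.1.1 - muRed f W) ^ 2 + d * (muRed f t.1.1 - muRed f W) + 1 = 0 := by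
    rintro ⟨⟨X, Y, Z⟩, ⟨hX, hY, hZ⟩, heq, hcube⟩
    exact (forward_quad hmonic hmpos htwo hpow hX hY hZ hW heq hcube).1
  have hbwd : ∀ u : {u : ResField f // u ^ 2 + d * u + 1 = 0},
      ((tau (u.1 + muRed f W)) ^ 2 ^ m = tau (u.1 + muRed f W) ∧
        (tau (u.1⁻¹ + muRed f W)) ^ 2 ^ m = tau (u.1⁻¹ + muRed f W) ∧
        (tau (u.1 + u.1⁻¹ + muRed f W)) ^ 2 ^ m = tau (u.1 + u.1⁻¹ + muRed f W)) ∧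
      tau (u.1 + muRed f W) + tau (u.1⁻¹ + muRed f W) - tau (u.1 + u.1⁻¹ + muRed f W)
        = W + 2 ∧
      muRed f (tau (u.1 + muRed f W)) ^ 3 + muRed f (tau (u.1⁻¹ + muRed f W)) ^ 3
          + muRed f (tau (u.1 + u.1⁻¹ + muRed f W)) ^ 3 = muRed f W ^ 3 + d := by
    rintro ⟨u, hu⟩
    have hu0 : u ≠ 0 := hne0 u hu
    have hui : u * u⁻¹ = 1 := mul_inv_cancel₀ hu0
    refine ⟨⟨htau1 _, htau1 _, htau1 _⟩, ?_, ?_⟩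
    · apply backward_eq hmonic hmpos htwo hpow (htau1 _) (htau1 _) (htau1 _) hW
      · rw [htau2, htau2, htau2]
        ring
      · rw [htau2, htau2, htau2]
        linear_combination hui
    · rw [htau2, htau2, htau2]
      have h := backward_cube htwo hu hui (muRed f W)
      linear_combination h
  apply Nat.card_congr
  refine Equiv.mk
    (fun t => ⟨muRed f t.1.1 - muRed f W, hfwd t⟩)
    (fun u => ⟨(tau (u.1 + muRed f W), tau (u.1⁻¹ + muRed f W),
        tau (u.1 + u.1⁻¹ + muRed f W)), hbwd u⟩)
    ?_ ?_
  · rintro ⟨⟨X, Y, Z⟩, ⟨⟨hX, hY, hZ⟩, heq, hcube⟩⟩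
    obtain ⟨hq, huv, h1⟩ := forward_quad hmonic hmpos htwo hpow hX hY hZ hW heq hcube
    apply Subtype.ext
    simp only
    set u := muRed f X - muRed f W with hu
    have hinv : u⁻¹ = muRed f Y - muRed f W := inv_eq_of_mul_eq_one_right huv
    refine Prod.ext ?_ (Prod.ext ?_ ?_)
    · apply teich_unique hmpos (htau1 _) hX
      rw [htau2]
      ring
    · apply teich_unique hmpos (htau1 _) hY
      rw [htau2, hinv]
      ring
    · apply teich_unique hmpos (htau1 _) hZ
      rw [htau2, hinv]
      linear_combination h1
  · rintro ⟨u, hu⟩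
    apply Subtype.ext
    simp only
    rw [htau2]
    ring

end Correspondence


/-- Let `m` be odd, `R = GR(4,m)`, `𝒯` its Teichmüller set,
`μ : R → 𝔽_q` reduction mod 2.  For `W ∈ 𝒯` and `d ∈ 𝔽_q`, the number of triples
`(X,Y,Z) ∈ 𝒯³` with `X + Y - Z = W + 2` in `R` and `x³ + y³ + z³ = w³ + d` in `𝔽_q`
equals `1` if `d = 0`, `2` if `d ∈ M₁`, and `0` if `d ∈ M₀ ∪ M₃`. -/
theorem statement12 (m : ℕ) (hm : Odd m) (hmpos : 0 < m)
    (f : Polynomial (ZMod 4)) (hmonic : f.Monic) (hdeg : f.natDegree = m)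
    (hirr : Irreducible (f.map (ZMod.castHom (show (2:ℕ) ∣ 4 by norm_num) (ZMod 2))))
    (W : AdjoinRoot f) (hW : W ^ 2 ^ m = W) (d : ResField f) :
    (d = 0 →
      Nat.card {t : AdjoinRoot f × AdjoinRoot f × AdjoinRoot f //
        (t.1 ^ 2 ^ m = t.1 ∧ t.2.1 ^ 2 ^ m = t.2.1 ∧ t.2.2 ^ 2 ^ m = t.2.2) ∧
        t.1 + t.2.1 - t.2.2 = W + 2 ∧
        muRed f t.1 ^ 3 + muRed f t.2.1 ^ 3 + muRed f t.2.2 ^ 3 = muRed f W ^ 3 + d} = 1) ∧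
    (d ≠ 0 → cubicRoots f d = 1 →
      Nat.card {t : AdjoinRoot f × AdjoinRoot f × AdjoinRoot f //
        (t.1 ^ 2 ^ m = t.1 ∧ t.2.1 ^ 2 ^ m = t.2.1 ∧ t.2.2 ^ 2 ^ m = t.2.2) ∧
        t.1 + t.2.1 - t.2.2 = W + 2 ∧
        muRed f t.1 ^ 3 + muRed f t.2.1 ^ 3 + muRed f t.2.2 ^ 3 = muRed f W ^ 3 + d} = 2) ∧
    (d ≠ 0 → (cubicRoots f d = 0 ∨ cubicRoots f d = 3) →
      Nat.card {t : AdjoinRoot f × AdjoinRoot f × AdjoinRoot f //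
        (t.1 ^ 2 ^ m = t.1 ∧ t.2.1 ^ 2 ^ m = t.2.1 ∧ t.2.2 ^ 2 ^ m = t.2.2) ∧
        t.1 + t.2.1 - t.2.2 = W + 2 ∧
        muRed f t.1 ^ 3 + muRed f t.2.1 ^ 3 + muRed f t.2.2 ^ 3 = muRed f W ^ 3 + d} = 0) := by
  obtain ⟨instF, hfield, htwo, hcardk⟩ := resfield_props f hmonic hdeg hmpos hirr
  letI := instF
  letI : Field (ResField f) := hfield.toField
  have hpow : ∀ a : ResField f, a ^ 2 ^ m = a := fun a => kpow_card hcardk a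
  have hcnt := count_eq hmonic hmpos hfield htwo hpow W hW d
  have hfc := field_count (K := ResField f) (m := m) htwo hm hmpos hcardk d
  refine ⟨fun h0 => ?_, fun hd hN => ?_, fun hd hN => ?_⟩
  · rw [hcnt]
    exact hfc.1 h0
  · rw [hcnt]
    exact hfc.2.1 hd hN
  · rw [hcnt]
    exact hfc.2.2 hd hN
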